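/- For any real numbers x_1, ..., x_n in the interval [0, 1/2], one has ∑_{i=1}^n √(x_i/(1+x_i)) ≥ n √(x/(1+x)), where x = (x_1 x_2 ⋯ x_n)^{1/n} is the geometric mean. -/

import Mathlib

open Real Finset

noncomputable def gg (u : ℝ) : ℝ := (1 + Real.exp (-u)) ^ (-(1/2) : ℝ)
noncomputable def gg1 (u : ℝ) : ℝ :=
  (1/2) * (Real.exp (-u) * (1 + Real.exp (-u)) ^ (-(3/2) : ℝ))
noncomputable def gg2 (u : ℝ) : ℝ :=
  (1/2) * Real.exp (-u) * (1 + Real.exp (-u)) ^ (-(5/2) : ℝ) * ((1/2) * Real.exp (-u) - 1)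

lemma hApos (u : ℝ) : 0 < 1 + Real.exp (-u) := by positivity

lemma hA' (u : ℝ) : HasDerivAt (fun v : ℝ => 1 + Real.exp (-v)) (-Real.exp (-u)) u := by
  have h : HasDerivAt (fun v : ℝ => Real.exp (-v)) (Real.exp (-u) * (-1)) u :=
    (Real.hasDerivAt_exp (-u)).comp u ((hasDerivAt_id u).neg)
  simpa using h.const_add 1

lemma hg' (u : ℝ) : HasDerivAt gg (gg1 u) u := by
  have h := (Real.hasDerivAt_rpow_const (p := (-(1/2) : ℝ))
    (Or.inl (hApos u).ne')).comp u (hA' u)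
  have he : (-(1/2) : ℝ) * (1 + Real.exp (-u)) ^ ((-(1/2) : ℝ) - 1) * (-Real.exp (-u)) = gg1 u := by
    have : ((-(1/2) : ℝ) - 1) = (-(3/2) : ℝ) := by norm_num
    rw [this]; unfold gg1; ring
  exact he ▸ h

lemma hg'' (u : ℝ) : HasDerivAt gg1 (gg2 u) u := by
  have h1 : HasDerivAt (fun v : ℝ => Real.exp (-v)) (-Real.exp (-u)) u := by
    have h : HasDerivAt (fun v : ℝ => Real.exp (-v)) (Real.exp (-u) * (-1)) u :=
      (Real.hasDerivAt_exp (-u)).comp u ((hasDerivAt_id u).neg)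
    simpa using h
  have h2 : HasDerivAt (fun v : ℝ => (1 + Real.exp (-v)) ^ (-(3/2) : ℝ))
      ((-(3/2) : ℝ) * (1 + Real.exp (-u)) ^ ((-(3/2) : ℝ) - 1) * (-Real.exp (-u))) u :=
    by have h := (Real.hasDerivAt_rpow_const (p := (-(3/2) : ℝ)) (Or.inl (hApos u).ne')).comp u (hA' u); exact h
  have h := ((h1.mul h2).const_mul (1/2 : ℝ))
  have he : (1/2 : ℝ) * (-Real.exp (-u) * (1 + Real.exp (-u)) ^ (-(3/2) : ℝ) +
      Real.exp (-u) * ((-(3/2) : ℝ) * (1 + Real.exp (-u)) ^ ((-(3/2) : ℝ) - 1) * (-Real.exp (-u))))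
      = gg2 u := by
    have e1 : ((-(3/2) : ℝ) - 1) = (-(5/2) : ℝ) := by norm_num
    have e2 : (1 + Real.exp (-u)) ^ (-(3/2) : ℝ)
        = (1 + Real.exp (-u)) ^ (-(5/2) : ℝ) * (1 + Real.exp (-u)) := by
      rw [← Real.rpow_add_one (hApos u).ne' (-(5/2) : ℝ)]
      norm_num
    rw [e1, e2]; unfold gg2; ring
  exact he ▸ h

lemma gg_convex : ConvexOn ℝ (Set.Iic (Real.log (1/2))) gg := by
  apply convexOn_of_hasDerivWithinAt2_nonneg (f' := gg1) (f'' := gg2) (convex_Iic _)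
  · exact fun u _ => (hg' u).continuousAt.continuousWithinAt
  · exact fun u _ => (hg' u).hasDerivWithinAt
  · exact fun u _ => (hg'' u).hasDerivWithinAt
  · intro u hu
    rw [interior_Iic] at hu
    have h2 : (2 : ℝ) < Real.exp (-u) := by
      have hlog : Real.log (1/2) = -Real.log 2 := by rw [one_div, Real.log_inv]
      rw [hlog] at hu
      have : Real.exp (Real.log 2) < Real.exp (-u) := Real.exp_lt_exp.2 (by
        simp only [Set.mem_Iio] at hu; linarith)
      rwa [Real.exp_log (by norm_num : (0:ℝ) < 2)] at this
    have : 0 ≤ (1/2 : ℝ) * Real.exp (-u) - 1 := by linarith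
    unfold gg2
    have : (0:ℝ) < (1 + Real.exp (-u)) ^ (-(5/2) : ℝ) := Real.rpow_pos_of_pos (hApos u) _
    positivity

lemma gg_eq (u : ℝ) : gg u = Real.sqrt (Real.exp u / (1 + Real.exp u)) := by
  have h1 : Real.exp u / (1 + Real.exp u) = (1 + Real.exp (-u))⁻¹ := by
    rw [Real.exp_neg]
    field_simp
    ring
  rw [h1, Real.sqrt_eq_rpow, Real.inv_rpow (hApos u).le, ← Real.rpow_neg (hApos u).le]
  rfl

theorem sqrt_ratio_geometric_mean (n : ℕ) (hn : 1 ≤ n) (x : Fin n → ℝ)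
    (hx : ∀ i, x i ∈ Set.Icc (0 : ℝ) (1 / 2)) :
    ∑ i, Real.sqrt (x i / (1 + x i)) ≥
      n * Real.sqrt ((∏ i, x i) ^ ((1 : ℝ) / n) / (1 + (∏ i, x i) ^ ((1 : ℝ) / n))) := by
  have hsum_nonneg : 0 ≤ ∑ i, Real.sqrt (x i / (1 + x i)) := by
    apply Finset.sum_nonneg; intro i _; exact Real.sqrt_nonneg _
  by_cases h0 : ∃ i, x i = 0
  · obtain ⟨i, hi⟩ := h0
    have hp : ∏ i, x i = 0 := Finset.prod_eq_zero (Finset.mem_univ i) hi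
    rw [hp, Real.zero_rpow (by positivity : ((1:ℝ)/n) ≠ 0)]
    simpa using hsum_nonneg
  · push_neg at h0
    have hxpos : ∀ i, 0 < x i := fun i => lt_of_le_of_ne (hx i).1 (Ne.symm (h0 i))
    have hppos : 0 < ∏ i, x i := Finset.prod_pos (fun i _ => hxpos i)
    set P : ℝ := (∏ i, x i) ^ ((1:ℝ)/n) with hP
    have hPpos : 0 < P := Real.rpow_pos_of_pos hppos _
    have hnpos : 0 < (n : ℝ) := by exact_mod_cast hn
    have hjensen := gg_convex.map_sum_le (t := Finset.univ) (w := fun _ : Fin n => (1:ℝ)/n)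
      (p := fun i => Real.log (x i))
      (fun i _ => by positivity)
      (by simp [Finset.sum_const]; field_simp)
      (fun i _ => by
        have : Real.log (x i) ≤ Real.log (1/2) := Real.log_le_log (hxpos i) (hx i).2
        exact this)
    have hmean : (∑ i, ((1:ℝ)/n) • Real.log (x i)) = Real.log P := by
      rw [hP, Real.log_rpow hppos, Real.log_prod (fun i _ => (hxpos i).ne'),
        Finset.mul_sum]
      simp [smul_eq_mul]
    rw [hmean] at hjensen
    have hl : gg (Real.log P) = Real.sqrt (P / (1 + P)) := by
      rw [gg_eq, Real.exp_log hPpos]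
    have hr : (∑ i, ((1:ℝ)/n) • gg (Real.log (x i)))
        = (1/n) * ∑ i, Real.sqrt (x i / (1 + x i)) := by
      rw [Finset.mul_sum]
      congr 1; ext i
      rw [gg_eq, Real.exp_log (hxpos i), smul_eq_mul]
    rw [hl, hr] at hjensen
    rw [ge_iff_le]
    calc (n : ℝ) * Real.sqrt (P / (1 + P))
        ≤ (n : ℝ) * ((1/n) * ∑ i, Real.sqrt (x i / (1 + x i))) := by
          exact mul_le_mul_of_nonneg_left hjensen hnpos.le
      _ = ∑ i, Real.sqrt (x i / (1 + x i)) := by field_simp
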